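/- Let T : M(N,ℂ) → M(N,ℂ) be a positive linear operator that is doubly stochastic, i.e., T(I) = I and T*(I) = I where T* is the adjoint with respect to the trace inner product. Then T is rank non-decreasing: rank(T(X)) ≥ rank(X) for all X ⪰ 0. -/

import Mathlib

open Matrix
open scoped ComplexOrder

variable {n : ℕ}


-- C = 0 if trace (Cᴴ C) = 0
lemma aux_eq_zero_of_trace (C : Matrix (Fin m) (Fin k) ℂ)
    (h : Matrix.trace (Cᴴ * C) = 0) : C = 0 := by
  have hdiag : ∀ j, (Cᴴ * C) j j = dotProduct (star (fun i => C i j)) (fun i => C i j) := by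
    intro j; simp [Matrix.mul_apply, Matrix.conjTranspose_apply, dotProduct]
  have hzero : ∀ j ∈ Finset.univ, (Cᴴ * C) j j = 0 := by
    rw [Matrix.trace] at h
    refine (Finset.sum_eq_zero_iff_of_nonneg ?_).mp ?_
    · intro j _; rw [hdiag]; exact dotProduct_star_self_nonneg _
    · simpa [Matrix.diag] using h
  ext i j
  have := hzero j (Finset.mem_univ j)
  rw [hdiag] at this
  have := dotProduct_star_self_eq_zero.mp this
  exact congrFun this i

lemma aux_trace_psd_nonneg {A : Matrix (Fin n) (Fin n) ℂ} (hA : A.PosSemidef) :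
    0 ≤ A.trace := by
  rw [Matrix.trace]
  refine Finset.sum_nonneg fun i _ => ?_
  have h := hA.dotProduct_mulVec_nonneg (Pi.single i 1)
  have hs : star (Pi.single i 1 : Fin n → ℂ) = Pi.single i 1 := by
    funext k; by_cases hk : k = i <;> simp [hk, Pi.single_apply]
  rw [hs] at h
  simpa [dotProduct, Matrix.mulVec, Pi.single_apply, Finset.mul_sum] using h

section
open scoped MatrixOrder

lemma aux_trace_mul_psd_nonneg {A B : Matrix (Fin n) (Fin n) ℂ}
    (hA : A.PosSemidef) (hB : B.PosSemidef) : 0 ≤ (A * B).trace := by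
  have h1 : A * B = (A * CFC.sqrt B) * CFC.sqrt B := by rw [Matrix.mul_assoc, CFC.sqrt_mul_sqrt_self B hB.nonneg]
  rw [h1, Matrix.trace_mul_comm, ← Matrix.mul_assoc]
  have : CFC.sqrt B * A * CFC.sqrt B = (CFC.sqrt B)ᴴ * A * CFC.sqrt B := by rw [(CFC.sqrt_nonneg B).posSemidef.1]
  rw [this]
  exact aux_trace_psd_nonneg (hA.conjTranspose_mul_mul_same _)

lemma aux_mul_eq_zero_of_trace {A B : Matrix (Fin n) (Fin n) ℂ}
    (hA : A.PosSemidef) (hB : B.PosSemidef) (h : (A * B).trace = 0) : A * B = 0 := by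
  set a := CFC.sqrt A with ha
  set b := CFC.sqrt B with hb
  have hah : aᴴ = a := (CFC.sqrt_nonneg A).posSemidef.1
  have hbh : bᴴ = b := (CFC.sqrt_nonneg B).posSemidef.1
  have key : Matrix.trace ((a * b)ᴴ * (a * b)) = 0 := by
    have : (a * b)ᴴ * (a * b) = b * A * b := by
      rw [Matrix.conjTranspose_mul, hah, hbh]
      calc b * a * (a * b) = b * (a * a) * b := by noncomm_ring
        _ = b * A * b := by rw [CFC.sqrt_mul_sqrt_self A hA.nonneg]
    rw [this, Matrix.trace_mul_cycle, CFC.sqrt_mul_sqrt_self B hB.nonneg, Matrix.trace_mul_comm]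
    exact h
  have hab : a * b = 0 := aux_eq_zero_of_trace _ key
  have hAB : A * B = a * (a * b) * b := by
    rw [← CFC.sqrt_mul_sqrt_self A hA.nonneg, ← CFC.sqrt_mul_sqrt_self B hB.nonneg]; noncomm_ring
  rw [hAB, hab]; simp

end


-- conj of quadratic form
lemma aux_star_quad (M : Matrix (Fin n) (Fin n) ℂ) (v : Fin n → ℂ) :
    star (dotProduct (star v) (M *ᵥ v)) = dotProduct (star v) (Mᴴ *ᵥ v) := by
  rw [star_dotProduct, star_star, Matrix.star_mulVec, Matrix.dotProduct_mulVec,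
    ← Matrix.dotProduct_mulVec]

-- vanishing quadratic form implies zero (over ℂ)
lemma aux_quad_zero (M : Matrix (Fin n) (Fin n) ℂ)
    (h : ∀ v : Fin n → ℂ, dotProduct (star v) (M *ᵥ v) = 0) : M = 0 := by
  have hbil : ∀ v w : Fin n → ℂ, dotProduct (star v) (M *ᵥ w) = 0 := by
    intro v w
    have h1 := h (v + w)
    have h2 := h (v + Complex.I • w)
    have hv := h v
    have hw := h w
    simp only [Matrix.mulVec_add, dotProduct_add, star_add, add_dotProduct,
      Matrix.mulVec_smul, dotProduct_smul, star_smul, smul_dotProduct,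
      Complex.star_def, Complex.conj_I, smul_eq_mul, hv, hw] at h1 h2
    -- h1 : svMw + swMv = 0 ; h2 : I * svMw + (-I) * swMv = 0 (roughly)
    set x := dotProduct (star v) (M *ᵥ w)
    set y := dotProduct (star w) (M *ᵥ v)
    have e1 : x + y = 0 := by linear_combination h1
    have e2 : Complex.I * x - Complex.I * y = 0 := by linear_combination h2
    have hx : Complex.I * (2 * x) = 0 := by linear_combination e2 + Complex.I * e1
    rcases mul_eq_zero.mp hx with h' | h'
    · exact absurd h' Complex.I_ne_zero
    · have : (2:ℂ) ≠ 0 := two_ne_zero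
      rcases mul_eq_zero.mp h' with h'' | h''
      · exact absurd h'' this
      · exact h''
  ext i j
  have := hbil (Pi.single i 1) (Pi.single j 1)
  have hs : star (Pi.single i 1 : Fin n → ℂ) = Pi.single i 1 := by
    funext k; by_cases hk : k = i <;> simp [hk, Pi.single_apply]
  rw [hs] at this
  simpa [dotProduct, Matrix.mulVec, Pi.single_apply, Finset.mul_sum] using this

-- trace (vvᴴ * A) = quadratic form
lemma aux_trace_vec (A : Matrix (Fin n) (Fin n) ℂ) (v : Fin n → ℂ) :
    Matrix.trace (Matrix.of (fun i j => v i * star (v j)) * A)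
      = dotProduct (star v) (A *ᵥ v) := by
  simp only [Matrix.trace, Matrix.diag, Matrix.mul_apply, Matrix.of_apply,
    dotProduct, Matrix.mulVec, Pi.star_apply]
  rw [Finset.sum_comm]
  refine Finset.sum_congr rfl fun j _ => ?_
  rw [Finset.mul_sum]
  refine Finset.sum_congr rfl fun i _ => ?_
  ring

lemma aux_vec_psd (v : Fin n → ℂ) :
    (Matrix.of (fun i j => v i * star (v j))).PosSemidef := by
  have h := Matrix.posSemidef_conjTranspose_mul_self ((Matrix.replicateCol (Fin 1) v)ᴴ)
  convert h using 2
  ext i j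
  simp [Matrix.mul_apply, Matrix.conjTranspose_apply, Matrix.replicateCol_apply]

-- trace of a Hermitian matrix is sum of eigenvalues
lemma aux_trace_eigs {A : Matrix (Fin n) (Fin n) ℂ} (hA : A.IsHermitian) :
    A.trace = ∑ i, (hA.eigenvalues i : ℂ) := by
  conv_lhs => rw [hA.spectral_theorem, Unitary.conjStarAlgAut_apply]
  rw [Matrix.trace_mul_comm, ← Matrix.mul_assoc,
    (Matrix.mem_unitaryGroup_iff').mp hA.eigenvectorUnitary.2, Matrix.one_mul,
    Matrix.trace_diagonal]
  rfl


lemma aux_tadj_psd {N : ℕ}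
    (T Tadj : Matrix (Fin N) (Fin N) ℂ →ₗ[ℂ] Matrix (Fin N) (Fin N) ℂ)
    (hpos : ∀ X : Matrix (Fin N) (Fin N) ℂ, X.PosSemidef → (T X).PosSemidef)
    (hadj : ∀ X Y : Matrix (Fin N) (Fin N) ℂ,
      Matrix.trace (T X * Yᴴ) = Matrix.trace (X * (Tadj Y)ᴴ))
    (Y : Matrix (Fin N) (Fin N) ℂ) (hY : Y.PosSemidef) : (Tadj Y).PosSemidef := by
  have hquad : ∀ v : Fin N → ℂ, 0 ≤ dotProduct (star v) ((Tadj Y)ᴴ *ᵥ v) := by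
    intro v
    rw [← aux_trace_vec, ← hadj _ Y, hY.1.eq]
    exact aux_trace_mul_psd_nonneg (hpos _ (aux_vec_psd v)) hY
  have hherm : (Tadj Y)ᴴ = Tadj Y := by
    have hzero : ∀ v : Fin N → ℂ,
        dotProduct (star v) (((Tadj Y)ᴴ - Tadj Y) *ᵥ v) = 0 := by
      intro v
      have h2 : star (dotProduct (star v) ((Tadj Y)ᴴ *ᵥ v))
          = dotProduct (star v) ((Tadj Y)ᴴ *ᵥ v) :=
        by rw [Complex.star_def]
           exact Complex.conj_eq_iff_im.mpr (Complex.le_def.mp (hquad v)).2.symm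
      have h3 : dotProduct (star v) (Tadj Y *ᵥ v)
          = dotProduct (star v) ((Tadj Y)ᴴ *ᵥ v) := by
        conv_lhs => rw [← Matrix.conjTranspose_conjTranspose (Tadj Y), ← aux_star_quad, h2]
      rw [Matrix.sub_mulVec, dotProduct_sub, h3, sub_self]
    have := aux_quad_zero _ hzero
    rwa [sub_eq_zero] at this
  exact .of_dotProduct_mulVec_nonneg hherm (fun v => by rw [← hherm]; exact hquad v)

lemma aux_eig_le_one {B : Matrix (Fin n) (Fin n) ℂ} (hB : B.PosSemidef)
    (h1 : (1 - B).PosSemidef) (i : Fin n) : hB.1.eigenvalues i ≤ 1 := by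
  set v : Fin n → ℂ := ⇑(hB.1.eigenvectorBasis i) with hvdef
  have hv : B *ᵥ v = (hB.1.eigenvalues i : ℂ) • v := by
    have h := hB.1.mulVec_eigenvectorBasis i
    rw [hvdef, h]
    ext j
    simp [Complex.real_smul]
  have hvv : dotProduct (star v) v = 1 := by
    have h1' : (inner ℂ (hB.1.eigenvectorBasis i) (hB.1.eigenvectorBasis i) : ℂ) = 1 := by
      rw [inner_self_eq_norm_sq_to_K, hB.1.eigenvectorBasis.orthonormal.1 i]
      norm_num
    rw [EuclideanSpace.inner_eq_star_dotProduct, dotProduct_comm] at h1'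
    exact h1'
  have key := h1.dotProduct_mulVec_nonneg v
  rw [Matrix.sub_mulVec, Matrix.one_mulVec, dotProduct_sub, hvv, hv,
    dotProduct_smul, hvv, smul_eq_mul, mul_one] at key
  have : (0:ℂ) ≤ ((1 - hB.1.eigenvalues i : ℝ) : ℂ) := by push_cast; exact key
  have := Complex.zero_le_real.mp this
  linarith


theorem doublyStochastic_rank_nondecreasing {N : ℕ}
    (T Tadj : Matrix (Fin N) (Fin N) ℂ →ₗ[ℂ] Matrix (Fin N) (Fin N) ℂ)
    (hpos : ∀ X : Matrix (Fin N) (Fin N) ℂ, X.PosSemidef → (T X).PosSemidef)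
    (hadj : ∀ X Y : Matrix (Fin N) (Fin N) ℂ,
      Matrix.trace (T X * Yᴴ) = Matrix.trace (X * (Tadj Y)ᴴ))
    (hTI : T 1 = 1) (hTadjI : Tadj 1 = 1)
    (X : Matrix (Fin N) (Fin N) ℂ) (hX : X.PosSemidef) :
    X.rank ≤ (T X).rank := by
  classical
  have hBTadj := aux_tadj_psd T Tadj hpos hadj
  set A := T X with hAdef
  have hApsd : A.PosSemidef := hpos X hX
  have hAh : A.IsHermitian := hApsd.1
  set e := hAh.eigenvalues with hedef
  set U : Matrix (Fin N) (Fin N) ℂ := ↑(hAh.eigenvectorUnitary) with hUdef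
  have hUU : U * star U = 1 := (Matrix.mem_unitaryGroup_iff).mp hAh.eigenvectorUnitary.2
  have hU'U : star U * U = 1 := (Matrix.mem_unitaryGroup_iff').mp hAh.eigenvectorUnitary.2
  have hspec : A = U * Matrix.diagonal (RCLike.ofReal ∘ e) * star U := by
    conv_lhs => rw [hAh.spectral_theorem, Unitary.conjStarAlgAut_apply]
  set g : Fin N → ℂ := fun i => if e i = 0 then 1 else 0 with hgdef
  set m := (Finset.univ.filter (fun i => e i = 0)).card with hmdef
  set Q := U * Matrix.diagonal g * star U with hQdef
  have hgpsd : (Matrix.diagonal g).PosSemidef := by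
    rw [Matrix.posSemidef_diagonal_iff]
    intro i; by_cases h : e i = 0 <;> simp [hgdef, h]
  have hQpsd : Q.PosSemidef := by
    rw [hQdef, Matrix.star_eq_conjTranspose]
    exact hgpsd.mul_mul_conjTranspose_same U
  have h1Q : (1 - Q).PosSemidef := by
    have hdg : Matrix.diagonal (fun i => (1:ℂ) - g i) = 1 - Matrix.diagonal g := by
      rw [← Matrix.diagonal_one, ← Matrix.diagonal_sub]
    have h1 : (1 : Matrix (Fin N) (Fin N) ℂ) - Q
        = U * Matrix.diagonal (fun i => 1 - g i) * star U := by
      rw [hdg, Matrix.mul_sub, Matrix.mul_one, Matrix.sub_mul, hUU, hQdef]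
    rw [h1, Matrix.star_eq_conjTranspose]
    refine (Matrix.posSemidef_diagonal_iff.mpr ?_).mul_mul_conjTranspose_same U
    intro i; by_cases h : e i = 0 <;> simp [hgdef, h]
  have hDD : Matrix.diagonal (RCLike.ofReal ∘ e) * Matrix.diagonal g = 0 := by
    rw [Matrix.diagonal_mul_diagonal]
    have hz : (fun i => (RCLike.ofReal ∘ e) i * g i) = fun _ => (0:ℂ) := by
      funext i; by_cases h : e i = 0 <;> simp [hgdef, h]
    rw [hz]
    exact Matrix.diagonal_zero
  have hAQ : A * Q = 0 := by
    have expand : A * Q = U * Matrix.diagonal (RCLike.ofReal ∘ e) * (star U * U)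
        * Matrix.diagonal g * star U := by
      rw [hQdef]; nth_rewrite 1 [hspec]; noncomm_ring
    rw [expand, hU'U, Matrix.mul_one, Matrix.mul_assoc U, hDD, Matrix.mul_zero,
      Matrix.zero_mul]
  have htrQ : Q.trace = (m : ℂ) := by
    rw [hQdef, Matrix.trace_mul_comm, ← Matrix.mul_assoc, hU'U, Matrix.one_mul,
      Matrix.trace_diagonal, hgdef, hmdef]
    simp [Finset.sum_boole]
  have hrankA : A.rank = (Finset.univ.filter (fun i => ¬ e i = 0)).card := by
    rw [hAh.rank_eq_card_non_zero_eigs, Fintype.card_subtype]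
  have hcards : m + A.rank = N := by
    rw [hrankA, hmdef]
    simpa using Finset.card_filter_add_card_filter_not
      (s := (Finset.univ : Finset (Fin N))) (p := fun i => e i = 0)
  set B := Tadj Q with hBdef
  have hBpsd : B.PosSemidef := hBTadj Q hQpsd
  have h1Bpsd : (1 - B).PosSemidef := by
    have h : (1 : Matrix (Fin N) (Fin N) ℂ) - B = Tadj (1 - Q) := by
      rw [map_sub, hTadjI]
    rw [h]; exact hBTadj _ h1Q
  have hXB : X * B = 0 := by
    apply aux_mul_eq_zero_of_trace hX hBpsd
    have h := hadj X Q
    rw [hQpsd.1.eq, hBpsd.1.eq] at h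
    rw [← h, ← hAdef, hAQ, Matrix.trace_zero]
  have hrsum : X.rank + B.rank ≤ N := by
    have := Matrix.rank_add_rank_le_card_of_mul_eq_zero hXB
    simpa using this
  have htrB : B.trace = (m : ℂ) := by
    have h := hadj 1 Q
    rw [hTI, hQpsd.1.eq, hBpsd.1.eq, Matrix.one_mul, Matrix.one_mul] at h
    rw [← h, htrQ]
  set f := hBpsd.1.eigenvalues with hfdef
  have hsumf : ∑ i, f i = (m : ℝ) := by
    have h : ((∑ i, f i : ℝ) : ℂ) = ((m : ℝ) : ℂ) := by
      push_cast
      rw [← aux_trace_eigs hBpsd.1, htrB]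
    exact_mod_cast h
  have hrankB : (m : ℝ) ≤ (B.rank : ℝ) := by
    rw [← hsumf]
    have hrB : B.rank = (Finset.univ.filter (fun i => ¬ f i = 0)).card := by
      rw [hBpsd.1.rank_eq_card_non_zero_eigs, Fintype.card_subtype]
    rw [hrB]
    calc ∑ i, f i ≤ ∑ i : Fin N, (if ¬ f i = 0 then (1:ℝ) else 0) := by
          refine Finset.sum_le_sum fun i _ => ?_
          by_cases h : f i = 0
          · simp [h]
          · simp only [h, not_false_iff, if_true]
            exact aux_eig_le_one hBpsd h1Bpsd i
      _ = ((Finset.univ.filter (fun i => ¬ f i = 0)).card : ℝ) := by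
          rw [Finset.sum_boole]
  have hmB : m ≤ B.rank := by exact_mod_cast hrankB
  omega
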